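/- arXiv:1312.7533 — 2 statements merged into one kernel-verified Lean document; each statement's English description precedes it below -/
import Mathlib

section
/- For all real numbers s, t: | s_+^{3/2} − t_+^{3/2} − (3/2)·t_+^{1/2}·(s − t) | ≤ |s − t|^{3/2}, where x_+ = max(x, 0). -/
lemma rpow_three_halves (x : ℝ) (hx : 0 ≤ x) : x ^ ((3:ℝ)/2) = Real.sqrt x ^ 3 := by
  rw [show (3:ℝ)/2 = (1/2) * 3 by ring, Real.rpow_mul hx, ← Real.sqrt_eq_rpow,
    show (3:ℝ) = ((3:ℕ):ℝ) by norm_num, Real.rpow_natCast]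

lemma rpow_half (x : ℝ) : x ^ ((1:ℝ)/2) = Real.sqrt x := by
  rw [Real.sqrt_eq_rpow]

lemma sq_key (u v : ℝ) (hu0 : 0 ≤ u) (hv0 : 0 ≤ v) :
    (u ^ 3 - v ^ 3 - 3/2 * v * (u ^ 2 - v ^ 2)) ^ 2 ≤ |u ^ 2 - v ^ 2| ^ 3 := by
  rcases le_total v u with h | h
  · rw [abs_of_nonneg (by nlinarith)]
    have hA : (0:ℝ) ≤ u - v := sub_nonneg.mpr h
    have hbr : (0:ℝ) ≤ (u + v) ^ 3 - (u - v) * (u + v/2) ^ 2 := by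
      nlinarith [mul_nonneg (mul_nonneg hu0 hu0) hv0, mul_nonneg (mul_nonneg hu0 hv0) hv0,
        mul_nonneg (mul_nonneg hv0 hv0) hv0]
    nlinarith [mul_nonneg (pow_nonneg hA 3) hbr]
  · rw [abs_of_nonpos (by nlinarith)]
    have hA : (0:ℝ) ≤ v - u := sub_nonneg.mpr h
    have hbr : (0:ℝ) ≤ (u + v) ^ 3 - (v - u) * (u + v/2) ^ 2 := by
      nlinarith [mul_nonneg (mul_nonneg hu0 hu0) hv0, mul_nonneg (mul_nonneg hu0 hv0) hv0,
        mul_nonneg (mul_nonneg hv0 hv0) hv0, mul_nonneg (mul_nonneg hu0 hu0) hu0]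
    nlinarith [mul_nonneg (pow_nonneg hA 3) hbr]

theorem stmt_12 (s t : ℝ) :
    |max s 0 ^ ((3 : ℝ)/2) - max t 0 ^ ((3 : ℝ)/2)
        - 3/2 * max t 0 ^ ((1 : ℝ)/2) * (s - t)| ≤ |s - t| ^ ((3 : ℝ)/2) := by
  rw [rpow_three_halves _ (le_max_right s 0), rpow_three_halves _ (le_max_right t 0),
    rpow_half, rpow_three_halves _ (abs_nonneg _)]
  rcases le_or_gt s 0 with hs | hs <;> rcases le_or_gt t 0 with ht | ht
  · -- both ≤ 0
    rw [max_eq_right hs, max_eq_right ht]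
    simp only [Real.sqrt_zero]
    norm_num
  · -- s ≤ 0 < t
    rw [max_eq_right hs, max_eq_left ht.le]
    simp only [Real.sqrt_zero]
    set v := Real.sqrt t with hv
    have hv0 : 0 ≤ v := Real.sqrt_nonneg t
    have hv2 : v ^ 2 = t := Real.sq_sqrt ht.le
    have hd : |s - t| = t - s := by rw [abs_of_nonpos (by linarith)]; ring
    rw [hd]
    set δ := Real.sqrt (t - s) with hδ
    have hδ0 : 0 ≤ δ := Real.sqrt_nonneg _
    have hδ2 : δ ^ 2 = t - s := Real.sq_sqrt (by linarith)
    have hvδ : v ≤ δ := Real.sqrt_le_sqrt (by linarith)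
    have hinner : (0:ℝ) ≤ 0 ^ 3 - v ^ 3 - 3/2 * v * (s - t) := by nlinarith
    rw [abs_of_nonneg hinner]
    nlinarith [sq_nonneg (δ - v), sq_nonneg (δ + v), sq_nonneg (δ - 2*v), sq_nonneg (2*δ - v),
      mul_nonneg hv0 hδ0, mul_nonneg (mul_nonneg hv0 hδ0) hδ0, sq_nonneg (δ*δ - v*δ),
      sq_nonneg (δ*δ - 2*v*δ)]
  · -- t ≤ 0 < s
    rw [max_eq_left hs.le, max_eq_right ht]
    simp only [Real.sqrt_zero]
    have h1 : |s - t| = s - t := abs_of_nonneg (by linarith)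
    rw [h1]
    have h2 : Real.sqrt s ≤ Real.sqrt (s - t) := Real.sqrt_le_sqrt (by linarith)
    have h3 : (0:ℝ) ≤ Real.sqrt s := Real.sqrt_nonneg s
    have h4 : Real.sqrt s ^ 3 - 0 ^ 3 - 3/2 * 0 * (s - t) = Real.sqrt s ^ 3 := by ring
    rw [h4, abs_of_nonneg (by positivity)]
    exact pow_le_pow_left₀ h3 h2 3
  · -- both > 0
    rw [max_eq_left hs.le, max_eq_left ht.le]
    set u := Real.sqrt s with hu
    set v := Real.sqrt t with hv
    have hu0 : 0 ≤ u := Real.sqrt_nonneg s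
    have hv0 : 0 ≤ v := Real.sqrt_nonneg t
    have hu2 : u ^ 2 = s := Real.sq_sqrt hs.le
    have hv2 : v ^ 2 = t := Real.sq_sqrt ht.le
    set w := Real.sqrt |s - t| with hw
    have hw0 : 0 ≤ w := Real.sqrt_nonneg _
    have hw2 : w ^ 2 = |s - t| := Real.sq_sqrt (abs_nonneg _)
    apply (pow_le_pow_iff_left₀ (abs_nonneg _) (by positivity) two_ne_zero).mp
    rw [sq_abs]
    calc (u ^ 3 - v ^ 3 - 3/2 * v * (s - t)) ^ 2
        = (u ^ 3 - v ^ 3 - 3/2 * v * (u ^ 2 - v ^ 2)) ^ 2 := by rw [hu2, hv2]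
      _ ≤ |u ^ 2 - v ^ 2| ^ 3 := sq_key u v hu0 hv0
      _ = |s - t| ^ 3 := by rw [hu2, hv2]
      _ = (w ^ 3) ^ 2 := by rw [← hw2]; ring
end

section
/- Let L > 0, ε > 0, b > 0, s > 0, and let f : [0, L] → ℝ be continuously differentiable with f′(t) ≥ ε for all t ∈ [0, L]. Then the Lebesgue measure of the set { t ∈ [0, L] : ∃ j ∈ ℤ, |f(t) − 2jb| ≤ s } is at most (2s/ε)·( (f(L) − f(0))/(2b) + 1 ). -/
open MeasureTheory

set_option maxHeartbeats 1600000 in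
theorem stmt_14 (L ε b s : ℝ) (hL : 0 < L) (hε : 0 < ε) (hb : 0 < b) (hs : 0 < s)
    (f : ℝ → ℝ) (hf : ContDiffOn ℝ 1 f (Set.Icc 0 L))
    (hf' : ∀ t ∈ Set.Icc 0 L, ε ≤ derivWithin f (Set.Icc 0 L) t) :
    volume {t : ℝ | t ∈ Set.Icc 0 L ∧ ∃ j : ℤ, |f t - 2 * j * b| ≤ s} ≤
      ENNReal.ofReal ((2 * s / ε) * ((f L - f 0) / (2 * b) + 1)) := by
  have h2b : (0:ℝ) < 2 * b := by linarith
  set F0 := f 0 with hF0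
  set FL := f L with hFL
  -- growth estimate from the derivative lower bound
  have hcont : ContinuousOn f (Set.Icc 0 L) := hf.continuousOn
  have hdiff : DifferentiableOn ℝ f (interior (Set.Icc 0 L)) :=
    (hf.differentiableOn one_ne_zero).mono interior_subset
  have hderiv : ∀ x ∈ interior (Set.Icc (0:ℝ) L), ε ≤ deriv f x := by
    intro x hx
    rw [interior_Icc] at hx
    have hn : Set.Icc (0:ℝ) L ∈ nhds x := Icc_mem_nhds hx.1 hx.2
    have := hf' x (Set.Ioo_subset_Icc_self hx)
    rwa [derivWithin_of_mem_nhds hn] at this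
  have hmono : ∀ x ∈ Set.Icc (0:ℝ) L, ∀ y ∈ Set.Icc (0:ℝ) L, x ≤ y →
      ε * (y - x) ≤ f y - f x :=
    (convex_Icc 0 L).mul_sub_le_image_sub_of_le_deriv hcont hdiff hderiv
  have hX : ε * L ≤ FL - F0 := by
    have := hmono 0 ⟨le_rfl, hL.le⟩ L ⟨hL.le, le_rfl⟩ hL.le
    simpa using this
  have hXpos : 0 < FL - F0 := lt_of_lt_of_le (by positivity) hX
  -- bounds of f on the interval
  have hfmem : ∀ t ∈ Set.Icc (0:ℝ) L, F0 ≤ f t ∧ f t ≤ FL := by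
    intro t ht
    constructor
    · have := hmono 0 ⟨le_rfl, hL.le⟩ t ht ht.1
      nlinarith [mul_nonneg hε.le ht.1]
    · have := hmono t ht L ⟨hL.le, le_rfl⟩ ht.2
      nlinarith [mul_nonneg hε.le (sub_nonneg.2 ht.2)]
  set q : ℤ → ℝ := fun j => max 0 (min FL (2*(j:ℝ)*b+s) - max F0 (2*(j:ℝ)*b-s)) with hq
  have hqnn : ∀ j : ℤ, 0 ≤ q j := fun j => le_max_left _ _
  have hq2s : ∀ j : ℤ, q j ≤ 2*s := by
    intro j
    apply max_le (by linarith)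
    have h1 : min FL (2*(j:ℝ)*b+s) ≤ 2*(j:ℝ)*b+s := min_le_right _ _
    have h2 : 2*(j:ℝ)*b-s ≤ max F0 (2*(j:ℝ)*b-s) := le_max_right _ _
    linarith
  -- bound on the measure of each level set
  have key : ∀ j : ℤ, volume {t : ℝ | t ∈ Set.Icc 0 L ∧ |f t - 2 * j * b| ≤ s}
      ≤ ENNReal.ofReal (q j / ε) := by
    intro j
    set Sj := {t : ℝ | t ∈ Set.Icc 0 L ∧ |f t - 2 * j * b| ≤ s} with hSj
    rcases Set.eq_empty_or_nonempty Sj with h | ⟨w, hw⟩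
    · simp [h]
    · have hbdd : BddBelow Sj := ⟨0, fun t ht => ht.1.1⟩
      have hdist : ∀ t ∈ Sj, ∀ t' ∈ Sj, t - t' ≤ q j / ε := by
        intro t ht t' ht'
        rcases le_or_gt t' t with hle | hlt
        · have hgrow := hmono t' ht'.1 t ht.1 hle
          have h1 := hfmem t ht.1
          have h2 := hfmem t' ht'.1
          have h3 := abs_le.1 ht.2
          have h4 := abs_le.1 ht'.2
          have hft : f t ≤ min FL (2*(j:ℝ)*b+s) := le_min h1.2 (by linarith [h3.2])
          have hft' : max F0 (2*(j:ℝ)*b-s) ≤ f t' := max_le h2.1 (by linarith [h4.1])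
          have hfq : f t - f t' ≤ q j := le_trans (by linarith) (le_max_right 0 _)
          rw [le_div_iff₀ hε]
          nlinarith
        · have : (0:ℝ) ≤ q j / ε := div_nonneg (hqnn j) hε.le
          linarith
      have hsub2 : Sj ⊆ Set.Icc (sInf Sj) (sInf Sj + q j / ε) := by
        intro t ht
        refine ⟨csInf_le hbdd ht, ?_⟩
        have : t - q j / ε ≤ sInf Sj :=
          le_csInf ⟨w, hw⟩ (fun t' ht' => by linarith [hdist t ht t' ht'])
        linarith
      calc volume Sj ≤ volume (Set.Icc (sInf Sj) (sInf Sj + q j / ε)) :=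
            measure_mono hsub2
        _ = ENNReal.ofReal (q j / ε) := by rw [Real.volume_Icc]; ring_nf
  by_cases hsb : s ≤ b
  · -- non-overlapping case: sum over the relevant levels
    set j0 : ℤ := ⌈(F0 - s)/(2*b)⌉ with hj0def
    set j1 : ℤ := ⌊(FL + s)/(2*b)⌋ with hj1def
    have hj0 : F0 - s ≤ 2*(j0:ℝ)*b := by
      have := Int.le_ceil ((F0 - s)/(2*b))
      rw [div_le_iff₀ h2b] at this; linarith
    have hj1 : 2*(j1:ℝ)*b ≤ FL + s := by
      have := Int.floor_le ((FL + s)/(2*b))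
      rw [le_div_iff₀ h2b] at this; linarith
    have hsub : {t : ℝ | t ∈ Set.Icc 0 L ∧ ∃ j : ℤ, |f t - 2 * j * b| ≤ s} ⊆
        ⋃ j ∈ Finset.Icc j0 j1, {t : ℝ | t ∈ Set.Icc 0 L ∧ |f t - 2 * j * b| ≤ s} := by
      rintro t ⟨ht, j, hj⟩
      have h1 := hfmem t ht
      have h2 := abs_le.1 hj
      have hjlo : j0 ≤ j := by
        rw [hj0def, Int.ceil_le, div_le_iff₀ h2b]
        linarith
      have hjhi : j ≤ j1 := by
        rw [hj1def, Int.le_floor, le_div_iff₀ h2b]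
        linarith
      exact Set.mem_biUnion (Finset.mem_Icc.2 ⟨hjlo, hjhi⟩) ⟨ht, hj⟩
    have hsum : ∑ j ∈ Finset.Icc j0 j1, q j ≤ 2*s*((FL - F0)/(2*b) + 1) := by
      have hrhs : 2*s*((FL - F0)/(2*b) + 1) = s*((FL - F0) + 2*b)/b := by
        field_simp
      rw [hrhs]
      by_cases hj01 : j0 ≤ j1
      · by_cases hA : F0 + s ≤ 2*(j0:ℝ)*b
        · -- leftmost interval fully inside
          have hcard : ((Finset.Icc j0 j1).card : ℝ) = (j1:ℝ) + 1 - j0 := by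
            have h : ((j1 + 1 - j0).toNat : ℤ) = j1 + 1 - j0 := Int.toNat_of_nonneg (by omega)
            rw [Int.card_Icc]
            exact_mod_cast congrArg (fun z : ℤ => (z:ℝ)) h
          have hsumb := Finset.sum_le_card_nsmul (Finset.Icc j0 j1) q (2*s) (fun j _ => hq2s j)
          rw [nsmul_eq_mul, hcard] at hsumb
          have hd : 2*b*((j1:ℝ) - j0) ≤ FL - F0 := by linarith
          rw [le_div_iff₀ hb]
          nlinarith [mul_le_mul_of_nonneg_right hsumb hb.le,
            mul_le_mul_of_nonneg_left hd hs.le]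
        · by_cases hB : 2*(j1:ℝ)*b ≤ FL - s
          · have hcard : ((Finset.Icc j0 j1).card : ℝ) = (j1:ℝ) + 1 - j0 := by
              have h : ((j1 + 1 - j0).toNat : ℤ) = j1 + 1 - j0 := Int.toNat_of_nonneg (by omega)
              rw [Int.card_Icc]
              exact_mod_cast congrArg (fun z : ℤ => (z:ℝ)) h
            have hsumb := Finset.sum_le_card_nsmul (Finset.Icc j0 j1) q (2*s) (fun j _ => hq2s j)
            rw [nsmul_eq_mul, hcard] at hsumb
            have hd : 2*b*((j1:ℝ) - j0) ≤ FL - F0 := by linarith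
            rw [le_div_iff₀ hb]
            nlinarith [mul_le_mul_of_nonneg_right hsumb hb.le,
              mul_le_mul_of_nonneg_left hd hs.le]
          · push_neg at hA hB
            rcases eq_or_lt_of_le hj01 with heq | hlt
            · rw [← heq, Finset.Icc_self, Finset.sum_singleton]
              rw [le_div_iff₀ hb]
              nlinarith [hq2s j0]
            · have hdecomp : Finset.Icc j0 j1 = insert j0 (insert j1 (Finset.Ioo j0 j1)) := by
                ext x
                simp only [Finset.mem_Icc, Finset.mem_insert, Finset.mem_Ioo]
                omega
              have hnm1 : j0 ∉ insert j1 (Finset.Ioo j0 j1) := by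
                simp only [Finset.mem_insert, Finset.mem_Ioo]; omega
              have hnm2 : j1 ∉ Finset.Ioo j0 j1 := by
                simp only [Finset.mem_Ioo]; omega
              rw [hdecomp, Finset.sum_insert hnm1, Finset.sum_insert hnm2]
              have hq0 : q j0 ≤ 2*(j0:ℝ)*b + s - F0 := by
                apply max_le (by linarith)
                have h1 : min FL (2*(j0:ℝ)*b+s) ≤ 2*(j0:ℝ)*b+s := min_le_right _ _
                have h2 : F0 ≤ max F0 (2*(j0:ℝ)*b-s) := le_max_left _ _
                linarith
              have hq1 : q j1 ≤ FL + s - 2*(j1:ℝ)*b := by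
                apply max_le (by linarith)
                have h1 : min FL (2*(j1:ℝ)*b+s) ≤ FL := min_le_left _ _
                have h2 : 2*(j1:ℝ)*b-s ≤ max F0 (2*(j1:ℝ)*b-s) := le_max_right _ _
                linarith
              have hcardI : ((Finset.Ioo j0 j1).card : ℝ) = (j1:ℝ) - j0 - 1 := by
                have h : ((j1 - j0 - 1).toNat : ℤ) = j1 - j0 - 1 := Int.toNat_of_nonneg (by omega)
                rw [Int.card_Ioo]
                exact_mod_cast congrArg (fun z : ℤ => (z:ℝ)) h
              have hmid := Finset.sum_le_card_nsmul (Finset.Ioo j0 j1) q (2*s) (fun j _ => hq2s j)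
              rw [nsmul_eq_mul, hcardI] at hmid
              have hd1 : (1:ℝ) ≤ (j1:ℝ) - j0 := by
                have : (j0:ℝ) + 1 ≤ j1 := by exact_mod_cast hlt
                linarith
              have hsumtot : q j0 + (q j1 + ∑ x ∈ Finset.Ioo j0 j1, q x)
                  ≤ (FL - F0) + 2*s*((j1:ℝ) - j0) - 2*b*((j1:ℝ) - j0) := by linarith
              have hkey : (0:ℝ) ≤ 2*b*((j1:ℝ) - j0) + 2*s - (FL - F0) := by linarith
              rw [le_div_iff₀ hb]
              nlinarith [mul_le_mul_of_nonneg_right hsumtot hb.le,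
                mul_nonneg (sub_nonneg.2 hsb) hkey]
      · rw [Finset.Icc_eq_empty hj01, Finset.sum_empty]
        positivity
    calc volume {t : ℝ | t ∈ Set.Icc 0 L ∧ ∃ j : ℤ, |f t - 2 * j * b| ≤ s}
        ≤ volume (⋃ j ∈ Finset.Icc j0 j1,
            {t : ℝ | t ∈ Set.Icc 0 L ∧ |f t - 2 * j * b| ≤ s}) := measure_mono hsub
      _ ≤ ∑ j ∈ Finset.Icc j0 j1,
            volume {t : ℝ | t ∈ Set.Icc 0 L ∧ |f t - 2 * j * b| ≤ s} :=
          measure_biUnion_finset_le _ _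
      _ ≤ ∑ j ∈ Finset.Icc j0 j1, ENNReal.ofReal (q j / ε) :=
          Finset.sum_le_sum (fun j _ => key j)
      _ = ENNReal.ofReal (∑ j ∈ Finset.Icc j0 j1, q j / ε) :=
          (ENNReal.ofReal_sum_of_nonneg (fun j _ => div_nonneg (hqnn j) hε.le)).symm
      _ ≤ ENNReal.ofReal ((2 * s / ε) * ((FL - F0) / (2 * b) + 1)) := by
          apply ENNReal.ofReal_le_ofReal
          rw [← Finset.sum_div, div_le_iff₀ hε]
          have heq : (2 * s / ε) * ((FL - F0) / (2 * b) + 1) * ε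
              = 2 * s * ((FL - F0) / (2 * b) + 1) := by field_simp
          rw [heq]
          exact hsum
  · -- overlapping case: the whole interval is a good enough bound
    push_neg at hsb
    calc volume {t : ℝ | t ∈ Set.Icc 0 L ∧ ∃ j : ℤ, |f t - 2 * j * b| ≤ s}
        ≤ volume (Set.Icc (0:ℝ) L) := measure_mono (fun t ht => ht.1)
      _ = ENNReal.ofReal L := by rw [Real.volume_Icc]; ring_nf
      _ ≤ ENNReal.ofReal ((2 * s / ε) * ((FL - F0) / (2 * b) + 1)) := by
          apply ENNReal.ofReal_le_ofReal
          have hrhs : (2 * s / ε) * ((FL - F0) / (2 * b) + 1)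
              = (s * (FL - F0) + 2*s*b) / (ε * b) := by field_simp
          rw [hrhs, le_div_iff₀ (by positivity)]
          nlinarith [mul_nonneg hs.le (sub_nonneg.2 hX), mul_pos hs hb,
            mul_le_mul_of_nonneg_left hX hb.le, mul_lt_mul_of_pos_right hsb hXpos]
end
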